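/- Let ρ₊ʲ, ρ₋ʲ, ρ₊ᵏ, ρ₋ᵏ ∈ [0,1) with ρ₊ʲ + ρ₋ʲ < 1 and ρ₊ᵏ + ρ₋ᵏ < 1, and set κ = 1/((1-ρ₊ʲ-ρ₋ʲ)(1-ρ₊ᵏ-ρ₋ᵏ)). For a function φ : ℝ → ℝ and real t, define: φ̃(+1,-1) = κ[(1-ρ₋ʲ)(1-ρ₊ᵏ)φ(t) + ρ₊ʲρ₋ᵏφ(-t)], φ̃(-1,+1) = κ[(1-ρ₊ʲ)(1-ρ₋ᵏ)φ(-t) + ρ₋ʲρ₊ᵏφ(t)], φ̃(+1,+1) = -κ[ρ₊ʲ(1-ρ₋ᵏ)φ(-t) + ρ₊ᵏ(1-ρ₋ʲ)φ(t)], φ̃(-1,-1) = -κ[ρ₋ʲ(1-ρ₊ᵏ)φ(t) + ρ₋ᵏ(1-ρ₊ʲ)φ(-t)]. Suppose (ỹⱼ, ỹₖ) are obtained from true labels (yⱼ, yₖ) by independent class-conditional flips with rates ρ_{yⱼ}ʲ and ρ_{yₖ}ᵏ. Then E_{(ỹⱼ,ỹₖ)}[φ̃(ỹⱼ, ỹₖ)]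 equals φ(t) if (yⱼ,yₖ)=(+1,-1), φ(-t) if (yⱼ,yₖ)=(-1,+1), and 0 if yⱼ = yₖ. -/
import Mathlib


theorem stmt_3 (apj amj apk amk : ℝ)
    (h1 : 0 ≤ apj) (h2 : apj < 1) (h3 : 0 ≤ amj) (h4 : amj < 1)
    (h5 : 0 ≤ apk) (h6 : apk < 1) (h7 : 0 ≤ amk) (h8 : amk < 1)
    (hj : apj + amj < 1) (hk : apk + amk < 1)
    (φ : ℝ → ℝ) (t : ℝ) (yj yk : ℝ) (hyj : yj = 1 ∨ yj = -1) (hyk : yk = 1 ∨ yk = -1) :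
    let κ : ℝ := 1 / ((1 - apj - amj) * (1 - apk - amk))
    let φt : ℝ → ℝ → ℝ := fun s1 s2 =>
      if s1 = 1 ∧ s2 = -1 then κ * ((1 - amj) * (1 - apk) * φ t + apj * amk * φ (-t))
      else if s1 = -1 ∧ s2 = 1 then κ * ((1 - apj) * (1 - amk) * φ (-t) + amj * apk * φ t)
      else if s1 = 1 ∧ s2 = 1 then -(κ * (apj * (1 - amk) * φ (-t) + apk * (1 - amj) * φ t))
      else -(κ * (amj * (1 - apk) * φ t + amk * (1 - apj) * φ (-t)))
    let rj : ℝ := if yj = 1 then apj else amj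
    let rk : ℝ := if yk = 1 then apk else amk
    ∑ e1 : Bool, ∑ e2 : Bool,
        (if e1 then rj else 1 - rj) * (if e2 then rk else 1 - rk) *
          φt (if e1 then -yj else yj) (if e2 then -yk else yk)
      = if yj = 1 ∧ yk = -1 then φ t else if yj = -1 ∧ yk = 1 then φ (-t) else 0 := by
  have hjne : (1 - apj - amj) ≠ 0 := by linarith
  have hkne : (1 - apk - amk) ≠ 0 := by linarith
  intro κ φt rj rk
  simp only [Fintype.sum_bool, φt, rj, rk, κ]
  rcases hyj with rfl | rfl <;> rcases hyk with rfl | rfl <;> norm_num <;>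
    field_simp <;> ring
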